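/- arXiv:1201.6272 — 17 statements merged into one kernel-verified Lean document; each statement's English description precedes it below -/
import Mathlib

section
/- Let C be a cartesian category satisfying axiom (G). For any parallel morphisms f, g : A ⟶ B, if f ∘ x = g ∘ x for every element x of A, then f = g (equivalently, the terminal object 1 is a separator for C). -/
open CategoryTheory CategoryTheory.Limits

namespace CETCS

universe v u

variable {C : Type u} [Category.{v} C] [HasTerminal C]

/-- A morphism is onto if every (global) element of the codomain is hit. -/
def Onto {A B : C} (f : A ⟶ B) : Prop :=
  ∀ y : ⊤_ C ⟶ B, ∃ x : ⊤_ C ⟶ A, x ≫ f = y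

/-- Membership `x ∈ m` of an element in (the subobject given by) a morphism. -/
def Mem {M X : C} (m : M ⟶ X) (x : ⊤_ C ⟶ X) : Prop :=
  ∃ a : ⊤_ C ⟶ M, a ≫ m = x

/-- Membership `(x, y) ∈ (r₁, r₂)` for a binary relation. -/
def Mem2 {R X Y : C} (r₁ : R ⟶ X) (r₂ : R ⟶ Y) (x : ⊤_ C ⟶ X) (y : ⊤_ C ⟶ Y) : Prop :=
  ∃ a : ⊤_ C ⟶ R, a ≫ r₁ = x ∧ a ≫ r₂ = y

/-- Membership `(x, y, z) ∈ (r₁, r₂, r₃)` for a ternary relation. -/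
def Mem3 {R X Y Z : C} (r₁ : R ⟶ X) (r₂ : R ⟶ Y) (r₃ : R ⟶ Z)
    (x : ⊤_ C ⟶ X) (y : ⊤_ C ⟶ Y) (z : ⊤_ C ⟶ Z) : Prop :=
  ∃ a : ⊤_ C ⟶ R, a ≫ r₁ = x ∧ a ≫ r₂ = y ∧ a ≫ r₃ = z

/-- Axiom (G): every morphism that is both mono and onto is an isomorphism. -/
def AxiomG (C : Type u) [Category.{v} C] [HasTerminal C] : Prop :=
  ∀ {A B : C} (f : A ⟶ B), Mono f → Onto f → IsIso f

/-- A pair of morphisms with common domain is jointly monic. -/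
def JointlyMonic2 {R X Y : C} (r₁ : R ⟶ X) (r₂ : R ⟶ Y) : Prop :=
  ∀ {U : C} (f g : U ⟶ R), f ≫ r₁ = g ≫ r₁ → f ≫ r₂ = g ≫ r₂ → f = g

/-- A triple of morphisms with common domain is jointly monic. -/
def JointlyMonic3 {R X Y Z : C} (r₁ : R ⟶ X) (r₂ : R ⟶ Y) (r₃ : R ⟶ Z) : Prop :=
  ∀ {U : C} (f g : U ⟶ R), f ≫ r₁ = g ≫ r₁ → f ≫ r₂ = g ≫ r₂ → f ≫ r₃ = g ≫ r₃ → f = g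

/-- Axiom (Fct): every morphism factors as an onto morphism followed by a mono. -/
def AxiomFct (C : Type u) [Category.{v} C] [HasTerminal C] : Prop :=
  ∀ {A B : C} (f : A ⟶ B), ∃ (I : C) (e : A ⟶ I) (i : I ⟶ B), Onto e ∧ Mono i ∧ e ≫ i = f

/-- A morphism is a cover if any mono through which it factors is an isomorphism. -/
def IsCover {A B : C} (f : A ⟶ B) : Prop :=
  ∀ {I : C} (g : A ⟶ I) (m : I ⟶ B), Mono m → g ≫ m = f → IsIso m

/-- A choice object: every onto morphism into it has a section. -/
def ChoiceObject (P : C) : Prop :=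
  ∀ {A : C} (f : A ⟶ P), Onto f → ∃ g : P ⟶ A, g ≫ f = 𝟙 P

/-- Axiom (PA): every object is covered by a choice object. -/
def AxiomPA (C : Type u) [Category.{v} C] [HasTerminal C] : Prop :=
  ∀ A : C, ∃ (P : C) (p : P ⟶ A), ChoiceObject P ∧ Onto p

/-- Axiom (Π): universal dependent products exist. -/
def AxiomPi (C : Type u) [Category.{v} C] [HasTerminal C] : Prop :=
  ∀ {Y X I : C} (g : Y ⟶ X) (f : X ⟶ I),
    ∃ (P F : C) (ev : P ⟶ Y) (π₁ : P ⟶ F) (π₂ : P ⟶ X) (φ : F ⟶ I),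
      ev ≫ g = π₂ ∧ IsPullback π₂ π₁ f φ ∧
      ∀ (i : ⊤_ C ⟶ I) {R : C} (r₁ : R ⟶ X) (r₂ : R ⟶ Y), Mono r₁ →
        (∀ (x : ⊤_ C ⟶ X) (y : ⊤_ C ⟶ Y), Mem2 r₁ r₂ x y → y ≫ g = x ∧ x ≫ f = i) →
        (∀ x : ⊤_ C ⟶ X, x ≫ f = i → ∃ y : ⊤_ C ⟶ Y, Mem2 r₁ r₂ x y) →
        ∃! s : ⊤_ C ⟶ F, s ≫ φ = i ∧
          ∀ (x : ⊤_ C ⟶ X) (y : ⊤_ C ⟶ Y), Mem3 π₁ π₂ ev s x y ↔ Mem2 r₁ r₂ x y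

/-- `i, j` form a binary coproduct (sum) diagram. -/
def IsCoproductDiagram {A B S : C} (i : A ⟶ S) (j : B ⟶ S) : Prop :=
  ∀ {T : C} (f : A ⟶ T) (g : B ⟶ T), ∃! h : S ⟶ T, i ≫ h = f ∧ j ≫ h = g

/-- Axiom (DP): each element of a sum is a member of one of its injections. -/
def AxiomDP (C : Type u) [Category.{v} C] [HasTerminal C] : Prop :=
  ∀ {A B S : C} (i : A ⟶ S) (j : B ⟶ S), IsCoproductDiagram i j →
    ∀ z : ⊤_ C ⟶ S, Mem i z ∨ Mem j z

/-- An equivalence relation: jointly monic and reflexive, symmetric, transitive on elements. -/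
def EquivRelation {R X : C} (r₁ r₂ : R ⟶ X) : Prop :=
  JointlyMonic2 r₁ r₂ ∧
  (∀ x : ⊤_ C ⟶ X, Mem2 r₁ r₂ x x) ∧
  (∀ x y : ⊤_ C ⟶ X, Mem2 r₁ r₂ x y → Mem2 r₁ r₂ y x) ∧
  (∀ x y z : ⊤_ C ⟶ X, Mem2 r₁ r₂ x y → Mem2 r₁ r₂ y z → Mem2 r₁ r₂ x z)

/-- Axiom (Eff): all equivalence relations are effective. -/
def AxiomEff (C : Type u) [Category.{v} C] [HasTerminal C] : Prop :=
  ∀ {R X : C} (r₁ r₂ : R ⟶ X), EquivRelation r₁ r₂ →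
    ∃ (E : C) (e : X ⟶ E), ∀ x₁ x₂ : ⊤_ C ⟶ X, Mem2 r₁ r₂ x₁ x₂ ↔ x₁ ≫ e = x₂ ≫ e

/-- `z : 1 ⟶ N`, `S : N ⟶ N` form a natural numbers object. -/
def IsNNO {N : C} (z : ⊤_ C ⟶ N) (S : N ⟶ N) : Prop :=
  ∀ {A : C} (b : ⊤_ C ⟶ A) (h : A ⟶ A), ∃! f : N ⟶ A, z ≫ f = b ∧ S ≫ f = f ≫ h

/-- A Π-diagram for `g : Y ⟶ X`, `f : X ⟶ I`. -/
def IsPiDiagram {Y X I P F : C} (g : Y ⟶ X) (f : X ⟶ I)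
    (ev : P ⟶ Y) (π₁ : P ⟶ F) (π₂ : P ⟶ X) (φ : F ⟶ I) : Prop :=
  ev ≫ g = π₂ ∧ IsPullback π₂ π₁ f φ

/-- A universal Π-diagram for `g : Y ⟶ X`, `f : X ⟶ I`. -/
def IsUniversalPiDiagram {Y X I P F : C} (g : Y ⟶ X) (f : X ⟶ I)
    (ev : P ⟶ Y) (π₁ : P ⟶ F) (π₂ : P ⟶ X) (φ : F ⟶ I) : Prop :=
  ∀ {P' F' : C} (ev' : P' ⟶ Y) (π₁' : P' ⟶ F') (π₂' : P' ⟶ X) (φ' : F' ⟶ I),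
    IsPiDiagram g f ev' π₁' π₂' φ' →
    ∃! n : F' ⟶ F, φ' = n ≫ φ ∧
      ∀ m : P' ⟶ P, m ≫ π₁ = π₁' ≫ n → m ≫ π₂ = π₂' → m ≫ ev = ev'

/-- Every morphism factors as a cover followed by a mono. -/
def HasCoverMonoFactorizations (C : Type u) [Category.{v} C] [HasTerminal C] : Prop :=
  ∀ {A B : C} (f : A ⟶ B), ∃ (I : C) (e : A ⟶ I) (m : I ⟶ B), IsCover e ∧ Mono m ∧ e ≫ m = f

/-- Covers are stable under pullback. -/
def CoversPullbackStable (C : Type u) [Category.{v} C] [HasTerminal C] : Prop :=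
  ∀ {P A B Z : C} (p : P ⟶ A) (q : P ⟶ B) (f : A ⟶ Z) (g : B ⟶ Z),
    IsPullback p q f g → IsCover f → IsCover q

/-- The terminal object is projective (with respect to covers). -/
def TerminalProjective (C : Type u) [Category.{v} C] [HasTerminal C] : Prop :=
  ∀ {A B : C} (e : A ⟶ B), IsCover e → ∀ h : ⊤_ C ⟶ B, ∃ k : ⊤_ C ⟶ A, k ≫ e = h


/-- If a cartesian category satisfies (G), then the terminal object is a separator:
morphisms agreeing on all elements are equal. -/
theorem statement0 {C : Type u} [Category.{v} C]
    [HasTerminal C] [HasBinaryProducts C] [HasEqualizers C]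
    (hG : AxiomG C) {A B : C} (f g : A ⟶ B)
    (h : ∀ x : ⊤_ C ⟶ A, x ≫ f = x ≫ g) : f = g := by
  have hOnto : Onto (equalizer.ι f g) := fun y =>
    ⟨equalizer.lift y (h y), equalizer.lift_ι _ _⟩
  have := hG (equalizer.ι f g) inferInstance hOnto
  have := (cancel_epi (equalizer.ι f g)).mp (equalizer.condition f g)
  exact this

end CETCS
end

section
/- Let C be a cartesian category satisfying axiom (G). A morphism f : A ⟶ B is a monomorphism if and only if for all elements x, y of A, f ∘ x = f ∘ y implies x = y. -/
open CategoryTheory CategoryTheory.Limits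

namespace CETCS

universe v u

variable {C : Type u} [Category.{v} C] [HasTerminal C]

/-- In a cartesian category satisfying (G), a morphism is mono iff it is injective on elements. -/
theorem statement1 {C : Type u} [Category.{v} C]
    [HasTerminal C] [HasBinaryProducts C] [HasEqualizers C]
    (hG : AxiomG C) {A B : C} (f : A ⟶ B) :
    Mono f ↔ ∀ x y : ⊤_ C ⟶ A, x ≫ f = y ≫ f → x = y := by
  constructor
  · intro hf x y h
    exact (cancel_mono f).mp h
  · intro hinj
    -- equalizer of (fst ≫ f) and (snd ≫ f) on A ⨯ A
    set u : A ⨯ A ⟶ B := prod.fst ≫ f with hu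
    set v : A ⨯ A ⟶ B := prod.snd ≫ f with hv
    let K := equalizer u v
    let e : K ⟶ A ⨯ A := equalizer.ι u v
    -- the diagonal lifts to d : A ⟶ K
    have hdiag : (prod.lift (𝟙 A) (𝟙 A)) ≫ u = (prod.lift (𝟙 A) (𝟙 A)) ≫ v := by
      simp [hu, hv, prod.lift_fst_assoc, prod.lift_snd_assoc]
    let d : A ⟶ K := equalizer.lift _ hdiag
    have hde : d ≫ e = prod.lift (𝟙 A) (𝟙 A) := equalizer.lift_ι _ hdiag
    -- d is mono
    have hmono : Mono d := by
      constructor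
      intro U g h hg
      have : g ≫ (d ≫ e ≫ prod.fst) = h ≫ (d ≫ e ≫ prod.fst) := by
        simp only [← Category.assoc, hg]
      simpa [reassoc_of% hde, prod.lift_fst] using this
    -- d is onto
    have honto : Onto d := by
      intro k
      refine ⟨k ≫ e ≫ prod.fst, ?_⟩
      have hk : k ≫ (e ≫ u) = k ≫ (e ≫ v) := by
        rw [equalizer.condition]
      have hxy : (k ≫ e ≫ prod.fst) ≫ f = (k ≫ e ≫ prod.snd) ≫ f := by
        simpa [hu, hv, Category.assoc] using hk
      have heq : k ≫ e ≫ prod.fst = k ≫ e ≫ prod.snd := hinj _ _ hxy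
      have : ((k ≫ e ≫ prod.fst) ≫ d) ≫ e = k ≫ e := by
        rw [Category.assoc, hde]
        apply Limits.prod.hom_ext <;> simp [heq, prod.lift_fst, prod.lift_snd]
      exact (cancel_mono e).mp this
    have : IsIso d := hG d hmono honto
    -- hence e ≫ fst = e ≫ snd
    have hee : e ≫ prod.fst = e ≫ prod.snd := by
      have h1 : e = inv d ≫ prod.lift (𝟙 A) (𝟙 A) := by
        rw [← hde, IsIso.inv_hom_id_assoc]
      rw [h1]; simp [prod.lift_fst, prod.lift_snd]
    constructor
    intro U g h hgh
    have hlift : (prod.lift g h) ≫ u = (prod.lift g h) ≫ v := by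
      simp [hu, hv, hgh, prod.lift_fst_assoc, prod.lift_snd_assoc]
    have : equalizer.lift _ hlift ≫ e = prod.lift g h := equalizer.lift_ι _ hlift
    calc g = (prod.lift g h) ≫ prod.fst := by simp [prod.lift_fst]
      _ = equalizer.lift _ hlift ≫ e ≫ prod.fst := by rw [← Category.assoc, this]
      _ = equalizer.lift _ hlift ≫ e ≫ prod.snd := by rw [hee]
      _ = (prod.lift g h) ≫ prod.snd := by rw [← Category.assoc, this]
      _ = h := by simp [prod.lift_snd]

end CETCS
end

section
/- Let C be a cartesian category satisfying axiom (G). For all monomorphisms m : M ⟶ X and n : N ⟶ X, the following are equivalent: (i) for every element x of X, x ∈ m implies x ∈ n; (ii) there exists a morphism f : M ⟶ N with m = n ∘ f. -/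
open CategoryTheory CategoryTheory.Limits

namespace CETCS

universe v u

variable {C : Type u} [Category.{v} C] [HasTerminal C]

/-- In a cartesian category satisfying (G), elementwise inclusion of monos coincides with
factorization inclusion. -/
theorem statement2 {C : Type u} [Category.{v} C]
    [HasTerminal C] [HasBinaryProducts C] [HasEqualizers C]
    (hG : AxiomG C) {M N X : C} (m : M ⟶ X) (n : N ⟶ X) (hm : Mono m) (hn : Mono n) :
    (∀ x : ⊤_ C ⟶ X, Mem m x → Mem n x) ↔ ∃ f : M ⟶ N, m = f ≫ n := by
  haveI : HasPullbacks C := hasPullbacks_of_hasBinaryProducts_of_hasEqualizers C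
  constructor
  · intro h
    have hp : Mono (pullback.fst m n) := by infer_instance
    have honto : Onto (pullback.fst m n) := by
      intro a
      obtain ⟨b, hb⟩ := h (a ≫ m) ⟨a, rfl⟩
      exact ⟨pullback.lift a b hb.symm, pullback.lift_fst _ _ _⟩
    haveI := hG _ hp honto
    refine ⟨inv (pullback.fst m n) ≫ pullback.snd m n, ?_⟩
    rw [Category.assoc, ← pullback.condition, ← Category.assoc, IsIso.inv_hom_id,
      Category.id_comp]
  · rintro ⟨f, rfl⟩ x ⟨a, ha⟩
    exact ⟨a ≫ f, by rw [Category.assoc, ha]⟩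

end CETCS
end

section
/- Let C be a cartesian category satisfying axiom (G), and let r₁ : R ⟶ X, r₂ : R ⟶ Y be a jointly monic pair of morphisms (a binary relation between X and Y). Then r₁ is a monomorphism (i.e., the relation is a partial function) if and only if for all elements x of X and y, z of Y, (x,y) ∈ (r₁,r₂) and (x,z) ∈ (r₁,r₂) imply y = z. -/
open CategoryTheory CategoryTheory.Limits

namespace CETCS

universe v u

variable {C : Type u} [Category.{v} C] [HasTerminal C]

/-- In a cartesian category satisfying (G), a binary relation is a partial function iff
it is single-valued on elements. -/
theorem statement3 {C : Type u} [Category.{v} C]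
    [HasTerminal C] [HasBinaryProducts C] [HasEqualizers C]
    (hG : AxiomG C) {R X Y : C} (r₁ : R ⟶ X) (r₂ : R ⟶ Y) (hjm : JointlyMonic2 r₁ r₂) :
    Mono r₁ ↔ ∀ (x : ⊤_ C ⟶ X) (y z : ⊤_ C ⟶ Y),
      Mem2 r₁ r₂ x y → Mem2 r₁ r₂ x z → y = z := by
  constructor
  · intro hm x y z ⟨a, ha1, ha2⟩ ⟨b, hb1, hb2⟩
    have : a ≫ r₁ = b ≫ r₁ := by rw [ha1, hb1]
    have hab : a = b := hm.right_cancellation a b this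
    rw [← ha2, ← hb2, hab]
  · intro hsv
    constructor
    intro U f g hfg
    -- show f ≫ r₂ = g ≫ r₂ via equalizer + axiom G
    have key : f ≫ r₂ = g ≫ r₂ := by
      let e := equalizer.ι (f ≫ r₂) (g ≫ r₂)
      have hmono : Mono e := inferInstance
      have honto : Onto e := by
        intro u
        have hy : (u ≫ f) ≫ r₂ = (u ≫ g) ≫ r₂ := by
          apply hsv (u ≫ f ≫ r₁) ((u ≫ f) ≫ r₂) ((u ≫ g) ≫ r₂)
          · exact ⟨u ≫ f, by simp, rfl⟩
          · refine ⟨u ≫ g, ?_, rfl⟩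
            rw [Category.assoc, ← hfg]
        have hcomm : u ≫ (f ≫ r₂) = u ≫ (g ≫ r₂) := by
          simpa using hy
        exact ⟨equalizer.lift u hcomm, equalizer.lift_ι u hcomm⟩
      have hiso : IsIso e := hG e hmono honto
      have := equalizer.condition (f ≫ r₂) (g ≫ r₂)
      have h2 : e ≫ (f ≫ r₂) = e ≫ (g ≫ r₂) := this
      exact (cancel_epi e).mp h2
    exact hjm f g hfg key


end CETCS
end

section
/- Let C be a cartesian category satisfying axiom (G), and let r₁ : R ⟶ X, r₂ : R ⟶ Y be a jointly monic pair of morphisms (a binary relation between X and Y). Then r₁ is an isomorphism (i.e., the relation is a total function) if and only if for every element x of X there exists a unique element y of Y with (x,y) ∈ (r₁,r₂). -/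
open CategoryTheory CategoryTheory.Limits

namespace CETCS

universe v u

variable {C : Type u} [Category.{v} C] [HasTerminal C]

/-- In a cartesian category satisfying (G), a binary relation is a total function iff
every element of the domain is related to a unique element of the codomain. -/
theorem statement4 {C : Type u} [Category.{v} C]
    [HasTerminal C] [HasBinaryProducts C] [HasEqualizers C]
    (hG : AxiomG C) {R X Y : C} (r₁ : R ⟶ X) (r₂ : R ⟶ Y) (hjm : JointlyMonic2 r₁ r₂) :
    IsIso r₁ ↔ ∀ x : ⊤_ C ⟶ X, ∃! y : ⊤_ C ⟶ Y, Mem2 r₁ r₂ x y := by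
  constructor
  · intro h x
    refine ⟨x ≫ inv r₁ ≫ r₂, ⟨x ≫ inv r₁, by simp, by simp⟩, ?_⟩
    rintro y ⟨a, ha1, ha2⟩
    have ha : a = x ≫ inv r₁ := by rw [← ha1]; simp
    rw [← ha2, ha]; simp
  · intro h
    have hinj : ∀ a b : ⊤_ C ⟶ R, a ≫ r₁ = b ≫ r₁ → a = b := by
      intro a b hab
      have h2 : a ≫ r₂ = b ≫ r₂ :=
        (h (a ≫ r₁)).unique ⟨a, rfl, rfl⟩ ⟨b, hab.symm, rfl⟩
      exact hjm a b hab h2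
    have hP : HasPullbacks C := hasPullbacks_of_hasBinaryProducts_of_hasEqualizers C
    let δ : R ⟶ pullback r₁ r₁ := pullback.lift (𝟙 R) (𝟙 R) rfl
    have hδ1 : δ ≫ pullback.fst r₁ r₁ = 𝟙 R := by exact pullback.lift_fst _ _ _
    have hδ2 : δ ≫ pullback.snd r₁ r₁ = 𝟙 R := by exact pullback.lift_snd _ _ _
    have hδmono : Mono δ := by
      constructor
      intro U f g hfg
      have : f ≫ δ ≫ pullback.fst r₁ r₁ = g ≫ δ ≫ pullback.fst r₁ r₁ := by
        rw [← Category.assoc, ← Category.assoc, hfg]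
      simpa [hδ1] using this
    have hδonto : Onto δ := by
      intro k
      have heq : (k ≫ pullback.fst r₁ r₁) = (k ≫ pullback.snd r₁ r₁) :=
        hinj _ _ (by simp [pullback.condition])
      refine ⟨k ≫ pullback.fst r₁ r₁, ?_⟩
      apply pullback.hom_ext
      · simp [hδ1]
      · simp [hδ2, heq]
    have hδiso : IsIso δ := hG δ hδmono hδonto
    have hpq : pullback.fst r₁ r₁ = pullback.snd r₁ r₁ := by
      calc pullback.fst r₁ r₁ = inv δ ≫ δ ≫ pullback.fst r₁ r₁ := by simp
        _ = inv δ ≫ δ ≫ pullback.snd r₁ r₁ := by rw [hδ1, hδ2]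
        _ = pullback.snd r₁ r₁ := by simp
    have hmono : Mono r₁ := by
      constructor
      intro U f g hfg
      have h1 : pullback.lift f g hfg ≫ pullback.fst r₁ r₁ = f := by exact pullback.lift_fst _ _ _
      have h2 : pullback.lift f g hfg ≫ pullback.snd r₁ r₁ = g := by exact pullback.lift_snd _ _ _
      rw [← h1, hpq]; exact h2
    have honto : Onto r₁ := by
      intro x
      obtain ⟨y, ⟨a, ha1, _⟩, _⟩ := h x
      exact ⟨a, ha1⟩
    exact hG r₁ hmono honto


end CETCS
end

section
/- (Unique Choice) Let C be a cartesian category satisfying axiom (G), and let r₁ : R ⟶ X, r₂ : R ⟶ Y be a jointly monic pair of morphisms (a binary relation between X and Y). If for every element x of X there exists a unique element y of Y with (x,y) ∈ (r₁,r₂), then there exists a morphism f : X ⟶ Y such that (x, f ∘ x) ∈ (r₁,r₂) for every element x of X. -/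
open CategoryTheory CategoryTheory.Limits

namespace CETCS

universe v u

variable {C : Type u} [Category.{v} C] [HasTerminal C]

/-- (Unique Choice) In a cartesian category satisfying (G), a relation which relates each
element to a unique element is tracked by a morphism. -/
theorem statement5 {C : Type u} [Category.{v} C]
    [HasTerminal C] [HasBinaryProducts C] [HasEqualizers C]
    (hG : AxiomG C) {R X Y : C} (r₁ : R ⟶ X) (r₂ : R ⟶ Y) (hjm : JointlyMonic2 r₁ r₂)
    (h : ∀ x : ⊤_ C ⟶ X, ∃! y : ⊤_ C ⟶ Y, Mem2 r₁ r₂ x y) :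
    ∃ f : X ⟶ Y, ∀ x : ⊤_ C ⟶ X, Mem2 r₁ r₂ x (x ≫ f) := by
  -- kernel pair of r₁ via product + equalizer
  let K := equalizer (prod.fst ≫ r₁ : R ⨯ R ⟶ X) (prod.snd ≫ r₁)
  let ι : K ⟶ R ⨯ R := equalizer.ι _ _
  let q₁ : K ⟶ R := ι ≫ prod.fst
  let q₂ : K ⟶ R := ι ≫ prod.snd
  have hq : q₁ ≫ r₁ = q₂ ≫ r₁ := by
    simpa [q₁, q₂, Category.assoc] using equalizer.condition (prod.fst ≫ r₁ : R ⨯ R ⟶ X) (prod.snd ≫ r₁)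
  let e : equalizer (q₁ ≫ r₂) (q₂ ≫ r₂) ⟶ K := equalizer.ι _ _
  have he : IsIso e := by
    apply hG e inferInstance
    intro k
    obtain ⟨y, _, huniq⟩ := h (k ≫ q₁ ≫ r₁)
    have h1 : Mem2 r₁ r₂ (k ≫ q₁ ≫ r₁) (k ≫ q₁ ≫ r₂) :=
      ⟨k ≫ q₁, by simp, by simp⟩
    have h2 : Mem2 r₁ r₂ (k ≫ q₁ ≫ r₁) (k ≫ q₂ ≫ r₂) :=
      ⟨k ≫ q₂, by rw [Category.assoc, ← hq, Category.assoc], by simp⟩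
    have heq : k ≫ q₁ ≫ r₂ = k ≫ q₂ ≫ r₂ := (huniq _ h1).trans (huniq _ h2).symm
    exact ⟨equalizer.lift k (by simpa using heq), equalizer.lift_ι _ _⟩
  have hqq : q₁ = q₂ := by
    apply hjm _ _ hq
    have := equalizer.condition (q₁ ≫ r₂) (q₂ ≫ r₂)
    exact (cancel_epi e).mp (by simpa using this)
  have hmono : Mono r₁ := by
    constructor
    intro U f g hfg
    have : prod.lift f g ≫ (prod.fst ≫ r₁ : R ⨯ R ⟶ X) = prod.lift f g ≫ (prod.snd ≫ r₁) := by
      rw [← Category.assoc, ← Category.assoc, prod.lift_fst, prod.lift_snd, hfg]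
    let t : U ⟶ K := equalizer.lift (prod.lift f g) this
    have ht : t ≫ ι = prod.lift f g := equalizer.lift_ι _ _
    have h1 : t ≫ q₁ = f := by simp [q₁, ← Category.assoc, ht]; exact prod.lift_fst _ _
    have h2 : t ≫ q₂ = g := by simp [q₂, ← Category.assoc, ht]; exact prod.lift_snd _ _
    rw [← h1, ← h2, hqq]
  have honto : Onto r₁ := by
    intro x
    obtain ⟨y, ⟨a, ha1, _⟩, _⟩ := h x
    exact ⟨a, ha1⟩
  have : IsIso r₁ := hG r₁ hmono honto
  refine ⟨inv r₁ ≫ r₂, fun x => ⟨x ≫ inv r₁, by simp, by simp⟩⟩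

end CETCS
end

section
/- Let C be a cartesian category satisfying axiom (G). A commutative square consisting of morphisms π₁ : P ⟶ A, π₂ : P ⟶ B, f : A ⟶ C, g : B ⟶ C with f ∘ π₁ = g ∘ π₂ is a pullback square if and only if for all elements x of A and y of B with f ∘ x = g ∘ y there exists a unique element t of P with x = π₁ ∘ t and y = π₂ ∘ t. -/
open CategoryTheory CategoryTheory.Limits

namespace CETCS

universe v u

variable {C : Type u} [Category.{v} C] [HasTerminal C]

/-- In a cartesian category satisfying (G), a commutative square is a pullback iff it has the
element-wise universal property. -/
theorem statement6 {C : Type u} [Category.{v} C]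
    [HasTerminal C] [HasBinaryProducts C] [HasEqualizers C]
    (hG : AxiomG C) {P A B Z : C} (π₁ : P ⟶ A) (π₂ : P ⟶ B) (f : A ⟶ Z) (g : B ⟶ Z)
    (comm : π₁ ≫ f = π₂ ≫ g) :
    IsPullback π₁ π₂ f g ↔
      ∀ (x : ⊤_ C ⟶ A) (y : ⊤_ C ⟶ B), x ≫ f = y ≫ g →
        ∃! t : ⊤_ C ⟶ P, x = t ≫ π₁ ∧ y = t ≫ π₂ := by
  have : HasPullbacks C := hasPullbacks_of_hasBinaryProducts_of_hasEqualizers C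
  constructor
  · intro hp x y hxy
    refine ⟨hp.lift x y hxy, ⟨(hp.lift_fst x y hxy).symm, (hp.lift_snd x y hxy).symm⟩, ?_⟩
    rintro t ⟨h1, h2⟩
    apply hp.hom_ext
    · rw [← h1, hp.lift_fst]
    · rw [← h2, hp.lift_snd]
  · intro hyp
    -- canonical comparison map
    let h : P ⟶ pullback f g := pullback.lift π₁ π₂ comm
    have hmono : Mono h := by
      constructor
      intro U u v huv
      have h1 : u ≫ π₁ = v ≫ π₁ := by
        have := congrArg (· ≫ pullback.fst f g) huv
        simp only [h, Category.assoc] at this; rwa [pullback.lift_fst] at this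
      have h2 : u ≫ π₂ = v ≫ π₂ := by
        have := congrArg (· ≫ pullback.snd f g) huv
        simp only [h, Category.assoc] at this; rwa [pullback.lift_snd] at this
      -- use equalizer + axiom G
      let e := equalizer.ι u v
      have honto : Onto e := by
        intro w
        have hw : ((w ≫ u) ≫ π₁) ≫ f = ((w ≫ u) ≫ π₂) ≫ g := by
          simp only [Category.assoc, comm]
        obtain ⟨t, ht, huniq⟩ := hyp ((w ≫ u) ≫ π₁) ((w ≫ u) ≫ π₂) hw
        have e1 : w ≫ u = t := huniq (w ≫ u) ⟨rfl, rfl⟩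
        have e2 : w ≫ v = t := huniq (w ≫ v)
          ⟨by simp only [Category.assoc, h1], by simp only [Category.assoc, h2]⟩
        exact ⟨equalizer.lift (f := u) (g := v) w (e1.trans e2.symm), equalizer.lift_ι _ _⟩
      have : IsIso e := hG e inferInstance honto
      have := equalizer.condition u v
      rw [← cancel_epi e]
      exact this
    have honto : Onto h := by
      intro w
      have hw : (w ≫ pullback.fst f g) ≫ f = (w ≫ pullback.snd f g) ≫ g := by
        simp [Category.assoc, pullback.condition]
      obtain ⟨t, ⟨ht1, ht2⟩, _⟩ := hyp (w ≫ pullback.fst f g) (w ≫ pullback.snd f g) hw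
      refine ⟨t, ?_⟩
      apply pullback.hom_ext
      · simp [h, ← ht1]; rw [pullback.lift_fst, ht1]
      · simp [h, ← ht2]; rw [pullback.lift_snd, ht2]
    have : IsIso h := hG h hmono honto
    exact IsPullback.of_iso_pullback ⟨comm⟩ (asIso h) (by simp [h]; rw [pullback.lift_fst]) (by simp [h]; rw [pullback.lift_snd])


end CETCS
end

section
/- (Quotient sets) Let C be a bicartesian category satisfying axiom (G), and let (r₁, r₂) : R ⟶ (X, X) be an equivalence relation on X. Then there exists a morphism q : X ⟶ Q such that (i) for all elements x₁, x₂ of X, (x₁,x₂) ∈ (r₁,r₂) implies q ∘ x₁ = q ∘ x₂, and (ii) for every morphism f : X ⟶ Y such that (x₁,x₂) ∈ (r₁,r₂) implies f ∘ x₁ = f ∘ x₂ for all elements x₁, x₂, there exists a unique h : Q ⟶ Y with h ∘ q = f. If moreover C satisfies axiom (Eff), then (x₁,x₂) ∈ (r₁,r₂) if and only if q ∘ x₁ = q ∘ x₂, for all elements x₁, x₂ of X. -/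
open CategoryTheory CategoryTheory.Limits

namespace CETCS

universe v u

variable {C : Type u} [Category.{v} C] [HasTerminal C]

/-- (Quotient sets) In a bicartesian category satisfying (G), every equivalence relation has a
quotient; under (Eff) the quotient map identifies exactly the related elements. -/
theorem statement7 {C : Type u} [Category.{v} C]
    [HasTerminal C] [HasBinaryProducts C] [HasEqualizers C]
    [HasInitial C] [HasBinaryCoproducts C] [HasCoequalizers C]
    (hG : AxiomG C) {R X : C} (r₁ r₂ : R ⟶ X) (hr : EquivRelation r₁ r₂) :
    ∃ (Q : C) (q : X ⟶ Q),
      (∀ x₁ x₂ : ⊤_ C ⟶ X, Mem2 r₁ r₂ x₁ x₂ → x₁ ≫ q = x₂ ≫ q) ∧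
      (∀ {Y : C} (f : X ⟶ Y),
        (∀ x₁ x₂ : ⊤_ C ⟶ X, Mem2 r₁ r₂ x₁ x₂ → x₁ ≫ f = x₂ ≫ f) →
        ∃! h : Q ⟶ Y, q ≫ h = f) ∧
      (AxiomEff C → ∀ x₁ x₂ : ⊤_ C ⟶ X, Mem2 r₁ r₂ x₁ x₂ ↔ x₁ ≫ q = x₂ ≫ q) := by
  have key : ∀ {Y : C} (f : X ⟶ Y),
      (∀ x₁ x₂ : ⊤_ C ⟶ X, Mem2 r₁ r₂ x₁ x₂ → x₁ ≫ f = x₂ ≫ f) → r₁ ≫ f = r₂ ≫ f := by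
    intro Y f hf
    have hOnto : Onto (equalizer.ι (r₁ ≫ f) (r₂ ≫ f)) := by
      intro a
      have h : a ≫ (r₁ ≫ f) = a ≫ (r₂ ≫ f) := by
        have := hf (a ≫ r₁) (a ≫ r₂) ⟨a, rfl, rfl⟩
        simpa using this
      exact ⟨equalizer.lift a h, equalizer.lift_ι _ _⟩
    haveI := hG (equalizer.ι (r₁ ≫ f) (r₂ ≫ f)) inferInstance hOnto
    exact (cancel_epi (equalizer.ι (r₁ ≫ f) (r₂ ≫ f))).1
      (equalizer.condition (r₁ ≫ f) (r₂ ≫ f))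
  refine ⟨coequalizer r₁ r₂, coequalizer.π r₁ r₂, ?_, ?_, ?_⟩
  · rintro x₁ x₂ ⟨a, h1, h2⟩
    rw [← h1, ← h2, Category.assoc, Category.assoc, coequalizer.condition]
  · intro Y f hf
    have h := key f hf
    refine ⟨coequalizer.desc f h, coequalizer.π_desc _ _, ?_⟩
    intro g hg
    apply coequalizer.hom_ext
    rw [hg, coequalizer.π_desc]
  · intro hEff x₁ x₂
    obtain ⟨E, e, hE⟩ := hEff r₁ r₂ hr
    have hcond : ∀ x₁ x₂ : ⊤_ C ⟶ X, Mem2 r₁ r₂ x₁ x₂ → x₁ ≫ e = x₂ ≫ e :=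
      fun a b h => (hE a b).1 h
    have hre : r₁ ≫ e = r₂ ≫ e := key e hcond
    constructor
    · rintro ⟨a, h1, h2⟩
      rw [← h1, ← h2, Category.assoc, Category.assoc, coequalizer.condition]
    · intro hq
      apply (hE x₁ x₂).2
      have : x₁ ≫ coequalizer.π r₁ r₂ ≫ coequalizer.desc e hre =
          x₂ ≫ coequalizer.π r₁ r₂ ≫ coequalizer.desc e hre := by
        rw [← Category.assoc, ← Category.assoc, hq]
      simpa [coequalizer.π_desc] using this

end CETCS
end

section
/- (Induction) Let C be a cartesian category satisfying axiom (G) and possessing a natural numbers object 0 : 1 ⟶ N, S : N ⟶ N. Let r : R ⟶ N be a monomorphism. If 0 ∈ r and for every element n of N, n ∈ r implies S ∘ n ∈ r, then n ∈ r for every element n of N. -/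
open CategoryTheory CategoryTheory.Limits

namespace CETCS

universe v u

variable {C : Type u} [Category.{v} C] [HasTerminal C]

/-- (Induction) In a cartesian category satisfying (G) with an NNO, any subobject of N
containing 0 and closed under successor contains every element of N. -/
theorem statement8 {C : Type u} [Category.{v} C]
    [HasTerminal C] [HasBinaryProducts C] [HasEqualizers C]
    (hG : AxiomG C) {N : C} (z : ⊤_ C ⟶ N) (S : N ⟶ N) (hN : IsNNO z S)
    {R : C} (r : R ⟶ N) (hr : Mono r)
    (h0 : Mem r z) (hS : ∀ n : ⊤_ C ⟶ N, Mem r n → Mem r (n ≫ S)) :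
    ∀ n : ⊤_ C ⟶ N, Mem r n := by
  have : HasPullbacks C := hasPullbacks_of_hasBinaryProducts_of_hasEqualizers C
  -- Pullback of r along r ≫ S
  let Q := pullback (r ≫ S) r
  let p₁ : Q ⟶ R := pullback.fst (r ≫ S) r
  let p₂ : Q ⟶ R := pullback.snd (r ≫ S) r
  have hcond : p₁ ≫ (r ≫ S) = p₂ ≫ r := pullback.condition
  have hmono : Mono p₁ := inferInstance
  have honto : Onto p₁ := by
    intro a
    obtain ⟨b, hb⟩ := hS (a ≫ r) ⟨a, rfl⟩
    exact ⟨pullback.lift a b (by simpa [Category.assoc] using hb.symm),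
      pullback.lift_fst _ _ _⟩
  have hiso : IsIso p₁ := hG p₁ hmono honto
  let h : R ⟶ R := inv p₁ ≫ p₂
  have hhr : h ≫ r = r ≫ S := by
    have : p₂ ≫ r = p₁ ≫ (r ≫ S) := hcond.symm
    simp [h, Category.assoc, this, IsIso.inv_hom_id_assoc]
  obtain ⟨a₀, ha₀⟩ := h0
  obtain ⟨f, ⟨hf0, hfS⟩, -⟩ := hN a₀ h
  -- f ≫ r = 𝟙 N by uniqueness of recursion
  obtain ⟨g, -, hguniq⟩ := hN z S
  have h1 : f ≫ r = g := hguniq (f ≫ r) (by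
    constructor
    · rw [← Category.assoc, hf0, ha₀]
    · rw [← Category.assoc, hfS, Category.assoc, hhr, Category.assoc])
  have h2 : 𝟙 N = g := hguniq (𝟙 N) (by simp)
  intro n
  exact ⟨n ≫ f, by rw [Category.assoc, h1, ← h2, Category.comp_id]⟩

end CETCS
end

section
/- (Exponential objects) Let C be a cartesian category satisfying axioms (G) and (Π). Then for any objects X and Y there exist an object E and a total function e of two variables, given by morphisms ξ₁ : Q ⟶ E, ξ₂ : Q ⟶ X, υ : Q ⟶ Y where ξ₁, ξ₂ form a binary product diagram and (ξ₁, ξ₂, υ) are jointly monic, such that for every morphism f : X ⟶ Y there exists a unique element s of E such that for all elements x of X and y of Y: (s, x, y) ∈ (ξ₁, ξ₂, υ) if and only if f ∘ x = y. -/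
open CategoryTheory CategoryTheory.Limits

namespace CETCS

universe v u

variable {C : Type u} [Category.{v} C] [HasTerminal C]

/-- (Exponential objects) In a cartesian category satisfying (G) and (Π), for any objects X, Y
there is an object E and an evaluation total function of two variables such that every morphism
X ⟶ Y is represented by a unique element of E. -/
theorem statement9 {C : Type u} [Category.{v} C]
    [HasTerminal C] [HasBinaryProducts C] [HasEqualizers C]
    (hG : AxiomG C) (hPi : AxiomPi C) (X Y : C) :
    ∃ (E Q : C) (ξ₁ : Q ⟶ E) (ξ₂ : Q ⟶ X) (υ : Q ⟶ Y),
      (∀ {T : C} (a : T ⟶ E) (b : T ⟶ X), ∃! h : T ⟶ Q, h ≫ ξ₁ = a ∧ h ≫ ξ₂ = b) ∧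
      JointlyMonic3 ξ₁ ξ₂ υ ∧
      (∀ f : X ⟶ Y, ∃! s : ⊤_ C ⟶ E,
        ∀ (x : ⊤_ C ⟶ X) (y : ⊤_ C ⟶ Y), Mem3 ξ₁ ξ₂ υ s x y ↔ x ≫ f = y) := by
  obtain ⟨P, F, ev, π₁, π₂, φ, hev, hPB, hU⟩ :=
    hPi (Limits.prod.fst : X ⨯ Y ⟶ X) (terminal.from X)
  refine ⟨F, P, π₁, π₂, ev ≫ Limits.prod.snd, ?_, ?_, ?_⟩
  · intro T a b
    refine ⟨hPB.lift b a (Subsingleton.elim _ _), ⟨hPB.lift_snd _ _ _, hPB.lift_fst _ _ _⟩, ?_⟩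
    rintro h ⟨h1, h2⟩
    apply hPB.hom_ext
    · rw [hPB.lift_fst]; exact h2
    · rw [hPB.lift_snd]; exact h1
  · intro U u v h1 h2 _
    exact hPB.hom_ext h2 h1
  · intro f
    have cond1 : ∀ (x : ⊤_ C ⟶ X) (y : ⊤_ C ⟶ X ⨯ Y),
        Mem2 (𝟙 X) (prod.lift (𝟙 X) f) x y →
        y ≫ Limits.prod.fst = x ∧ x ≫ terminal.from X = terminal.from (⊤_ C) := by
      rintro x y ⟨a, ha1, ha2⟩
      constructor
      · rw [← ha2, Category.assoc, prod.lift_fst, Category.comp_id, ← ha1, Category.comp_id]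
      · exact Subsingleton.elim _ _
    have cond2 : ∀ x : ⊤_ C ⟶ X, x ≫ terminal.from X = terminal.from (⊤_ C) →
        ∃ y : ⊤_ C ⟶ X ⨯ Y, Mem2 (𝟙 X) (prod.lift (𝟙 X) f) x y := by
      intro x _
      exact ⟨x ≫ prod.lift (𝟙 X) f, x, by simp, rfl⟩
    obtain ⟨s, ⟨hsφ, hs⟩, huniq⟩ :=
      hU (terminal.from (⊤_ C)) (𝟙 X) (prod.lift (𝟙 X) f)
        (by infer_instance) cond1 cond2
    -- key characterization of Mem2 for the graph relation
    have mem2_iff : ∀ (x : ⊤_ C ⟶ X) (y : ⊤_ C ⟶ X ⨯ Y),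
        Mem2 (𝟙 X) (prod.lift (𝟙 X) f) x y ↔ y = prod.lift x (x ≫ f) := by
      intro x y
      constructor
      · rintro ⟨a, ha1, ha2⟩
        rw [Category.comp_id] at ha1
        subst ha1
        rw [← ha2, prod.comp_lift, Category.comp_id]
      · rintro rfl
        exact ⟨x, by simp, by rw [prod.comp_lift, Category.comp_id]⟩
    refine ⟨s, ?_, ?_⟩
    · intro x y
      constructor
      · rintro ⟨a, ha1, ha2, ha3⟩
        have h3 := (hs x (a ≫ ev)).mp ⟨a, ha1, ha2, rfl⟩
        rw [mem2_iff] at h3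
        rw [← ha3, ← Category.assoc, h3, prod.lift_snd]
      · intro hxy
        obtain ⟨a, ha1, ha2, ha3⟩ :=
          (hs x (prod.lift x y)).mpr ((mem2_iff x _).mpr (by rw [hxy]))
        exact ⟨a, ha1, ha2, by rw [← Category.assoc, ha3, prod.lift_snd]⟩
    · intro s' hs'
      apply huniq
      refine ⟨Subsingleton.elim _ _, ?_⟩
      intro x y
      rw [mem2_iff]
      constructor
      · rintro ⟨a, ha1, ha2, ha3⟩
        have hy1 : y ≫ Limits.prod.fst = x := by
          rw [← ha3, Category.assoc, hev, ha2]
        have hy2 : x ≫ f = y ≫ Limits.prod.snd := by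
          exact (hs' x (y ≫ Limits.prod.snd)).mp
            ⟨a, ha1, ha2, by rw [← Category.assoc, ha3]⟩
        apply Limits.prod.hom_ext
        · rw [prod.lift_fst, hy1]
        · rw [prod.lift_snd, hy2]
      · rintro rfl
        obtain ⟨a, ha1, ha2, ha3⟩ := (hs' x (x ≫ f)).mpr rfl
        refine ⟨a, ha1, ha2, ?_⟩
        apply Limits.prod.hom_ext
        · rw [Category.assoc, hev, ha2, prod.lift_fst]
        · rw [Category.assoc, prod.lift_snd, ← ha3]

end CETCS
end

section
/- (Dependent choices) Let C be a cartesian category satisfying axioms (G), (Π), (Fct) and (PA), and possessing a natural numbers object 0 : 1 ⟶ N, S : N ⟶ N. Then for any object X, any total relation (r₁, r₂) : R ⟶ (X, X) (i.e., for every element x of X there is an element y of X with (x,y) ∈ (r₁,r₂)) and any element x of X, there is a morphism f : N ⟶ X with f ∘ 0 = x and (f ∘ n, f ∘ S ∘ n) ∈ (r₁,r₂) for every element n of N. -/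
open CategoryTheory CategoryTheory.Limits

namespace CETCS

universe v u

variable {C : Type u} [Category.{v} C] [HasTerminal C]

/-- (Dependent choices) In a cartesian category satisfying (G), (Π), (Fct) and (PA) with an NNO,
every total relation on an object admits a choice sequence from any starting element. -/
theorem statement10 {C : Type u} [Category.{v} C]
    [HasTerminal C] [HasBinaryProducts C] [HasEqualizers C]
    (hG : AxiomG C) (hPi : AxiomPi C) (hFct : AxiomFct C) (hPA : AxiomPA C)
    {N : C} (z : ⊤_ C ⟶ N) (S : N ⟶ N) (hN : IsNNO z S)
    {X R : C} (r₁ r₂ : R ⟶ X) (hjm : JointlyMonic2 r₁ r₂)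
    (htot : ∀ x : ⊤_ C ⟶ X, ∃ y : ⊤_ C ⟶ X, Mem2 r₁ r₂ x y) (x : ⊤_ C ⟶ X) :
    ∃ f : N ⟶ X, z ≫ f = x ∧ ∀ n : ⊤_ C ⟶ N, Mem2 r₁ r₂ (n ≫ f) (n ≫ S ≫ f) := by
  have hpb : HasPullbacks C := hasPullbacks_of_hasBinaryProducts_of_hasEqualizers C
  -- r₁ is onto by totality
  have hr₁ : Onto r₁ := by
    intro y
    obtain ⟨_, a, ha, _⟩ := htot y
    exact ⟨a, ha⟩
  -- cover X by a choice object
  obtain ⟨P, p, hP, hp⟩ := hPA X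
  -- pull back r₁ along p
  let Q := pullback r₁ p
  have hq : (pullback.fst r₁ p) ≫ r₁ = (pullback.snd r₁ p) ≫ p := pullback.condition
  have hq₂ : Onto (pullback.snd r₁ p) := by
    intro u
    obtain ⟨a, ha⟩ := hr₁ (u ≫ p)
    exact ⟨pullback.lift a u ha, pullback.lift_snd _ _ _⟩
  obtain ⟨s, hs⟩ := hP _ hq₂
  -- the successor map into X
  set h : P ⟶ X := s ≫ pullback.fst r₁ p ≫ r₂ with hh
  -- lift h through p to an endomorphism k of P
  have hw : (pullback.fst h p) ≫ h = (pullback.snd h p) ≫ p := pullback.condition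
  have hw₁ : Onto (pullback.fst h p) := by
    intro u
    obtain ⟨a, ha⟩ := hp (u ≫ h)
    exact ⟨pullback.lift u a ha.symm, pullback.lift_fst _ _ _⟩
  obtain ⟨t, ht⟩ := hP _ hw₁
  set k : P ⟶ P := t ≫ pullback.snd h p with hk
  have hkp : k ≫ p = h := by
    rw [hk, Category.assoc, ← hw, ← Category.assoc, ht, Category.id_comp]
  -- key property: each element u of P is related to u ≫ k via p
  have key : ∀ u : ⊤_ C ⟶ P, Mem2 r₁ r₂ (u ≫ p) (u ≫ k ≫ p) := by
    intro u
    refine ⟨u ≫ s ≫ pullback.fst r₁ p, ?_, ?_⟩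
    · rw [Category.assoc, Category.assoc, hq]
      slice_lhs 2 3 => rw [hs]
      rw [Category.id_comp]
    · rw [hkp, hh]
      simp only [Category.assoc]
  -- lift x through p
  obtain ⟨x₀, hx₀⟩ := hp x
  -- iterate k with the NNO
  obtain ⟨g, ⟨hg₀, hgS⟩, -⟩ := hN x₀ k
  refine ⟨g ≫ p, ?_, ?_⟩
  · rw [← Category.assoc, hg₀, hx₀]
  · intro n
    have := key (n ≫ g)
    simp only [Category.assoc] at this ⊢
    rwa [← Category.assoc S g, hgS, Category.assoc]


end CETCS
end

section
/- Let C be a cartesian category satisfying axiom (G). If a morphism f : X ⟶ Y is factored as f = i ∘ g where g : X ⟶ I is onto and i : I ⟶ Y is a monomorphism, then this is an image factorization of f: for every factorization f = j ∘ h with j : J ⟶ Y a monomorphism there exists a morphism t : I ⟶ J with i = j ∘ t. -/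
open CategoryTheory CategoryTheory.Limits

namespace CETCS

universe v u

variable {C : Type u} [Category.{v} C] [HasTerminal C]

/-- In a cartesian category satisfying (G), a factorization of f as an onto morphism followed by
a mono is an image factorization. -/
theorem statement12 {C : Type u} [Category.{v} C]
    [HasTerminal C] [HasBinaryProducts C] [HasEqualizers C]
    (hG : AxiomG C) {X Y I : C} (f : X ⟶ Y) (g : X ⟶ I) (i : I ⟶ Y)
    (hg : Onto g) (hi : Mono i) (hfac : g ≫ i = f) :
    ∀ {J : C} (h : X ⟶ J) (j : J ⟶ Y), Mono j → h ≫ j = f →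
      ∃ t : I ⟶ J, i = t ≫ j := by
  intro J h j hj hhj
  have : HasFiniteProducts C := hasFiniteProducts_of_has_binary_and_terminal
  have : HasFiniteLimits C := hasFiniteLimits_of_hasEqualizers_and_finite_products
  -- pullback of i and j
  let P := pullback i j
  have hmono : Mono (pullback.fst i j) := pullback.fst_of_mono
  have honto : Onto (pullback.fst i j) := by
    intro x
    obtain ⟨a, ha⟩ := hg x
    have comm : (a ≫ h) ≫ j = x ≫ i := by
      rw [Category.assoc, hhj, ← hfac, ← Category.assoc, ha]
    refine ⟨pullback.lift x (a ≫ h) comm.symm, pullback.lift_fst _ _ _⟩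
  have : IsIso (pullback.fst i j) := hG _ hmono honto
  refine ⟨inv (pullback.fst i j) ≫ pullback.snd i j, ?_⟩
  rw [Category.assoc, ← pullback.condition, ← Category.assoc, IsIso.inv_hom_id,
    Category.id_comp]

end CETCS
end

section
/- Let C be a cartesian category satisfying axiom (G). Then (a) every onto morphism of C is a cover; and (b) if C additionally satisfies axiom (Fct), then every cover of C is onto. -/
open CategoryTheory CategoryTheory.Limits

namespace CETCS

universe v u

variable {C : Type u} [Category.{v} C] [HasTerminal C]

/-- In a cartesian category satisfying (G): (a) every onto morphism is a cover;
(b) if in addition (Fct) holds, every cover is onto. -/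
theorem statement13 {C : Type u} [Category.{v} C]
    [HasTerminal C] [HasBinaryProducts C] [HasEqualizers C]
    (hG : AxiomG C) :
    (∀ {A B : C} (f : A ⟶ B), Onto f → IsCover f) ∧
    (AxiomFct C → ∀ {A B : C} (f : A ⟶ B), IsCover f → Onto f) := by
  constructor
  · intro A B f hf I g m hm hgm
    apply hG m hm
    intro y
    obtain ⟨x, hx⟩ := hf y
    exact ⟨x ≫ g, by rw [Category.assoc, hgm, hx]⟩
  · intro hFct A B f hf y
    obtain ⟨I, e, i, he, hi, hei⟩ := hFct f
    have : IsIso i := hf e i hi hei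
    obtain ⟨x, hx⟩ := he (y ≫ inv i)
    exact ⟨x, by rw [← hei, ← Category.assoc, hx, Category.assoc,
      IsIso.inv_hom_id, Category.comp_id]⟩

end CETCS
end

section
/- Let C be a cartesian category satisfying axiom (G). Then C satisfies axiom (Fct) if and only if C is a regular category in which the terminal object 1 is projective. -/
open CategoryTheory CategoryTheory.Limits

namespace CETCS

universe v u

variable {C : Type u} [Category.{v} C] [HasTerminal C]

/-- In a cartesian category satisfying (G), (Fct) holds iff the category is regular (has
cover-mono factorizations and covers are stable under pullback) and the terminal object is
projective. -/
theorem statement14 {C : Type u} [Category.{v} C]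
    [HasTerminal C] [HasBinaryProducts C] [HasEqualizers C]
    (hG : AxiomG C) :
    AxiomFct C ↔
      (HasCoverMonoFactorizations C ∧ CoversPullbackStable C ∧ TerminalProjective C) := by
  -- Under (G), every onto morphism is a cover.
  have ontoCover : ∀ {A B : C} (f : A ⟶ B), Onto f → IsCover f := by
    intro A B f hf I g m hm hgm
    apply hG m hm
    intro y
    obtain ⟨x, hx⟩ := hf y
    exact ⟨x ≫ g, by rw [Category.assoc, hgm, hx]⟩
  constructor
  · intro hFct
    -- Under (Fct), every cover is onto.
    have coverOnto : ∀ {A B : C} (f : A ⟶ B), IsCover f → Onto f := by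
      intro A B f hf y
      obtain ⟨I, e, i, he, hi, hef⟩ := hFct f
      have : IsIso i := hf e i hi hef
      obtain ⟨x, hx⟩ := he (y ≫ inv i)
      exact ⟨x, by rw [← hef, ← Category.assoc, hx, Category.assoc,
        IsIso.inv_hom_id, Category.comp_id]⟩
    refine ⟨?_, ?_, ?_⟩
    · intro A B f
      obtain ⟨I, e, i, he, hi, hef⟩ := hFct f
      exact ⟨I, e, i, ontoCover e he, hi, hef⟩
    · intro P A B Z p q f g hpb hfcov
      apply ontoCover
      intro b
      obtain ⟨a, ha⟩ := coverOnto f hfcov (b ≫ g)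
      exact ⟨hpb.lift a b ha, hpb.lift_snd a b ha⟩
    · intro A B e hecov h
      obtain ⟨k, hk⟩ := coverOnto e hecov h
      exact ⟨k, hk⟩
  · rintro ⟨hFac, -, hProj⟩ A B f
    obtain ⟨I, e, m, hec, hm, hem⟩ := hFac f
    exact ⟨I, e, m, fun y => hProj e hec y, hm, hem⟩

end CETCS
end

section
/- Let C be a cartesian category with binary coproducts satisfying axioms (G), (Fct) and (DP). For any monomorphisms r : R ⟶ X and s : S ⟶ X there exists a monomorphism t : T ⟶ X such that for every element x of X: x ∈ t if and only if (x ∈ r or x ∈ s). -/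
open CategoryTheory CategoryTheory.Limits

namespace CETCS

universe v u

variable {C : Type u} [Category.{v} C] [HasTerminal C]

/-- (Disjunction of subobjects) In a cartesian category with binary coproducts satisfying (G),
(Fct) and (DP), any two subobjects of X have a union. -/
theorem statement15 {C : Type u} [Category.{v} C]
    [HasTerminal C] [HasBinaryProducts C] [HasEqualizers C] [HasBinaryCoproducts C]
    (hG : AxiomG C) (hFct : AxiomFct C) (hDP : AxiomDP C)
    {R S X : C} (r : R ⟶ X) (s : S ⟶ X) (hr : Mono r) (hs : Mono s) :
    ∃ (T : C) (t : T ⟶ X), Mono t ∧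
      ∀ x : ⊤_ C ⟶ X, (Mem t x ↔ (Mem r x ∨ Mem s x)) := by
  obtain ⟨T, e, t, he, ht, hfac⟩ := hFct (coprod.desc r s)
  refine ⟨T, t, ht, fun x => ⟨fun ⟨a, ha⟩ => ?_, fun h => ?_⟩⟩
  · obtain ⟨b, hb⟩ := he a
    have hcop : IsCoproductDiagram (coprod.inl : R ⟶ R ⨿ S) coprod.inr := by
      intro U f g
      exact ⟨coprod.desc f g, ⟨coprod.inl_desc f g, coprod.inr_desc f g⟩,
        fun h ⟨h1, h2⟩ => coprod.hom_ext (h1.trans (coprod.inl_desc f g).symm)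
          (h2.trans (coprod.inr_desc f g).symm)⟩
    rcases hDP _ _ hcop b with ⟨c, hc⟩ | ⟨c, hc⟩
    · left
      refine ⟨c, ?_⟩
      have : c ≫ coprod.inl ≫ coprod.desc r s = x := by
        rw [← Category.assoc, hc, ← hfac, ← Category.assoc, hb, ha]
      exact (congrArg (c ≫ ·) (coprod.inl_desc r s)).symm.trans this
    · right
      refine ⟨c, ?_⟩
      have : c ≫ coprod.inr ≫ coprod.desc r s = x := by
        rw [← Category.assoc, hc, ← hfac, ← Category.assoc, hb, ha]
      exact (congrArg (c ≫ ·) (coprod.inr_desc r s)).symm.trans this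
  · rcases h with ⟨a, ha⟩ | ⟨a, ha⟩
    · exact ⟨a ≫ coprod.inl ≫ e, by
        rw [Category.assoc, Category.assoc, hfac]
        exact (congrArg (a ≫ ·) (coprod.inl_desc r s)).trans ha⟩
    · exact ⟨a ≫ coprod.inr ≫ e, by
        rw [Category.assoc, Category.assoc, hfac]
        exact (congrArg (a ≫ ·) (coprod.inr_desc r s)).trans ha⟩

end CETCS
end

section
/- Let C be a cartesian category satisfying axioms (G) and (Π). For any monomorphisms r : R ⟶ X and s : S ⟶ X there exists a monomorphism t : T ⟶ X such that for every element x of X: x ∈ t if and only if (x ∈ r implies x ∈ s). -/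
open CategoryTheory CategoryTheory.Limits

namespace CETCS

universe v u

variable {C : Type u} [Category.{v} C] [HasTerminal C]

/-- (Implication of subobjects) In a cartesian category satisfying (G) and (Π), for any two
subobjects r, s of X there is a subobject whose members are exactly the elements x with
x ∈ r → x ∈ s. -/
theorem statement16 {C : Type u} [Category.{v} C]
    [HasTerminal C] [HasBinaryProducts C] [HasEqualizers C]
    (hG : AxiomG C) (hPi : AxiomPi C)
    {R S X : C} (r : R ⟶ X) (s : S ⟶ X) (hr : Mono r) (hs : Mono s) :
    ∃ (T : C) (t : T ⟶ X), Mono t ∧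
      ∀ x : ⊤_ C ⟶ X, (Mem t x ↔ (Mem r x → Mem s x)) := by
  haveI := hr; haveI := hs
  haveI : HasPullbacks C := hasPullbacks_of_hasBinaryProducts_of_hasEqualizers C
  haveI hmonoElt : ∀ {Z : C} (i : ⊤_ C ⟶ Z), Mono i :=
    fun i => ⟨fun f g _ => terminal.hom_ext f g⟩
  set Q := pullback r s with hQ
  set u : Q ⟶ R := pullback.fst r s with hu
  haveI : Mono u := pullback.fst_of_mono
  obtain ⟨P, F, ev, pi1, pi2, phi, h1, hpb, H⟩ := hPi u r
  -- Step A: a point of F over i provides lifts for all points of R over i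
  have stepA : ∀ (i : ⊤_ C ⟶ X) (s' : ⊤_ C ⟶ F), s' ≫ phi = i →
      ∀ x : ⊤_ C ⟶ R, x ≫ r = i → ∃ y : ⊤_ C ⟶ Q, y ≫ u = x := by
    intro i s' hs' x hx
    refine ⟨hpb.lift x s' (by rw [hx, hs']) ≫ ev, ?_⟩
    rw [Category.assoc, h1, hpb.lift_fst]
  -- Key: if all points of R over i lift to Q, then there is a unique point of F over i
  have key : ∀ i : ⊤_ C ⟶ X,
      (∀ x : ⊤_ C ⟶ R, x ≫ r = i → ∃ y : ⊤_ C ⟶ Q, y ≫ u = x) →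
      ∃! s' : ⊤_ C ⟶ F, s' ≫ phi = i := by
    intro i hlift
    haveI : Mono i := hmonoElt i
    set k : pullback (u ≫ r) i ⟶ Q := pullback.fst (u ≫ r) i with hk
    haveI : Mono k := pullback.fst_of_mono
    have hKr : ∀ a : ⊤_ C ⟶ pullback (u ≫ r) i, a ≫ k ≫ u ≫ r = i := by
      intro a
      rw [pullback.condition (f := u ≫ r) (g := i), ← Category.assoc,
        terminal.hom_ext (a ≫ pullback.snd (u ≫ r) i) (𝟙 _), Category.id_comp]
    have cond1 : ∀ (x : ⊤_ C ⟶ R) (y : ⊤_ C ⟶ Q),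
        Mem2 (k ≫ u) k x y → y ≫ u = x ∧ x ≫ r = i := by
      rintro x y ⟨a, ha1, ha2⟩
      constructor
      · rw [← ha2, ← ha1, Category.assoc]
      · rw [← ha1]; simpa using hKr a
    have cond2 : ∀ x : ⊤_ C ⟶ R, x ≫ r = i → ∃ y : ⊤_ C ⟶ Q, Mem2 (k ≫ u) k x y := by
      intro x hx
      obtain ⟨y, hy⟩ := hlift x hx
      have hw : y ≫ u ≫ r = terminal.from (⊤_ C) ≫ i := by
        rw [← Category.assoc, hy, hx, terminal.hom_ext (terminal.from (⊤_ C)) (𝟙 _),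
          Category.id_comp]
      refine ⟨y, pullback.lift y (terminal.from _) hw, ?_, pullback.lift_fst _ _ _⟩
      rw [← Category.assoc, pullback.lift_fst, hy]
    have monoku : Mono (k ≫ u) := mono_comp k u
    obtain ⟨s', ⟨hsphi, _⟩, huniq⟩ := H i (k ≫ u) k monoku cond1 cond2
    -- Step C: any point of F over i satisfies the characterization
    have stepC : ∀ s'' : ⊤_ C ⟶ F, s'' ≫ phi = i →
        ∀ (x : ⊤_ C ⟶ R) (y : ⊤_ C ⟶ Q),
          Mem3 pi1 pi2 ev s'' x y ↔ Mem2 (k ≫ u) k x y := by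
      intro s'' hs'' x y
      constructor
      · rintro ⟨p, hp1, hp2, hp3⟩
        have hyu : y ≫ u = x := by rw [← hp3, ← hp2, Category.assoc, h1]
        have hxr : x ≫ r = i := by
          rw [← hp2, Category.assoc, hpb.w, ← Category.assoc, hp1, hs'']
        have hw : y ≫ u ≫ r = terminal.from (⊤_ C) ≫ i := by
          rw [← Category.assoc, hyu, hxr, terminal.hom_ext (terminal.from (⊤_ C)) (𝟙 _),
            Category.id_comp]
        refine ⟨pullback.lift y (terminal.from _) hw, ?_, pullback.lift_fst _ _ _⟩
        rw [← Category.assoc, pullback.lift_fst, hyu]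
      · rintro ⟨a, ha1, ha2⟩
        have hxr : x ≫ r = i := by rw [← ha1]; simpa using hKr a
        have hyu : y ≫ u = x := by rw [← ha2, ← ha1, Category.assoc]
        refine ⟨hpb.lift x s'' (by rw [hxr, hs'']), hpb.lift_snd _ _ _, hpb.lift_fst _ _ _, ?_⟩
        have : (hpb.lift x s'' (by rw [hxr, hs'']) ≫ ev) ≫ u = y ≫ u := by
          rw [Category.assoc, h1, hpb.lift_fst, hyu]
        exact (cancel_mono u).mp this
    exact ⟨s', hsphi, fun s'' h'' => huniq s'' ⟨h'', stepC s'' h''⟩⟩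
  -- injectivity of phi on points
  have inj : ∀ s₁ s₂ : ⊤_ C ⟶ F, s₁ ≫ phi = s₂ ≫ phi → s₁ = s₂ := by
    intro s₁ s₂ h12
    obtain ⟨s₀, -, huniq⟩ := key (s₁ ≫ phi) (stepA _ s₁ rfl)
    rw [huniq s₁ rfl, huniq s₂ h12.symm]
  -- phi is mono, via axiom (G) applied to the diagonal of the kernel pair
  have hmono : Mono phi := by
    set D : F ⟶ pullback phi phi := pullback.lift (𝟙 F) (𝟙 F) rfl with hD
    have hDf : D ≫ pullback.fst phi phi = 𝟙 F := pullback.lift_fst _ _ _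
    have hDs : D ≫ pullback.snd phi phi = 𝟙 F := pullback.lift_snd _ _ _
    have monoD : Mono D := by
      refine ⟨fun f g h => ?_⟩
      have := congrArg (· ≫ pullback.fst phi phi) h
      simpa [Category.assoc, hDf] using this
    have ontoD : Onto D := by
      intro z
      have hz : (z ≫ pullback.fst phi phi) ≫ phi = (z ≫ pullback.snd phi phi) ≫ phi := by
        rw [Category.assoc, Category.assoc, pullback.condition]
      have he := inj _ _ hz
      refine ⟨z ≫ pullback.fst phi phi, ?_⟩
      apply pullback.hom_ext
      · rw [Category.assoc, hDf, Category.comp_id]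
      · rw [Category.assoc, hDs, Category.comp_id, he]
    haveI : IsIso D := hG D monoD ontoD
    refine ⟨fun {U} f g h => ?_⟩
    have : pullback.fst phi phi = pullback.snd phi phi := by
      rw [← Category.id_comp (pullback.fst phi phi), ← Category.id_comp (pullback.snd phi phi),
        ← IsIso.inv_hom_id D, Category.assoc, Category.assoc, hDf, hDs]
    calc f = pullback.lift f g h ≫ pullback.fst phi phi := (pullback.lift_fst _ _ _).symm
      _ = pullback.lift f g h ≫ pullback.snd phi phi := by rw [this]
      _ = g := pullback.lift_snd _ _ _
  refine ⟨F, phi, hmono, fun x₀ => ⟨?_, ?_⟩⟩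
  · rintro ⟨s', hs'⟩ ⟨a, ha⟩
    obtain ⟨y, hy⟩ := stepA x₀ s' hs' a ha
    refine ⟨y ≫ pullback.snd r s, ?_⟩
    rw [Category.assoc, ← pullback.condition, ← Category.assoc]
    rw [hu] at hy
    rw [hy, ha]
  · intro himp
    have hlift : ∀ x : ⊤_ C ⟶ R, x ≫ r = x₀ → ∃ y : ⊤_ C ⟶ Q, y ≫ u = x := by
      intro x hx
      obtain ⟨b, hb⟩ := himp ⟨x, hx⟩
      refine ⟨pullback.lift x b (by rw [hx, hb]), ?_⟩
      rw [hu]; exact pullback.lift_fst _ _ _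
    obtain ⟨s', hs', -⟩ := key x₀ hlift
    exact ⟨s', hs'⟩


end CETCS
end

section
/- Let C be a cartesian category satisfying axioms (G) and (Fct). For any binary relation given by a jointly monic pair m₁ : M ⟶ X, m₂ : M ⟶ Y there exists a monomorphism e : E ⟶ X such that for every element x of X: x ∈ e if and only if there exists an element y of Y with (x,y) ∈ (m₁,m₂). -/
open CategoryTheory CategoryTheory.Limits

namespace CETCS

universe v u

variable {C : Type u} [Category.{v} C] [HasTerminal C]

/-- (Existential quantification) In a cartesian category satisfying (G) and (Fct), any binary
relation between X and Y has an existential image: a subobject of X whose members are exactly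
the x related to some y. -/
theorem statement17 {C : Type u} [Category.{v} C]
    [HasTerminal C] [HasBinaryProducts C] [HasEqualizers C]
    (hG : AxiomG C) (hFct : AxiomFct C)
    {M X Y : C} (m₁ : M ⟶ X) (m₂ : M ⟶ Y) (hjm : JointlyMonic2 m₁ m₂) :
    ∃ (E : C) (e : E ⟶ X), Mono e ∧
      ∀ x : ⊤_ C ⟶ X, (Mem e x ↔ ∃ y : ⊤_ C ⟶ Y, Mem2 m₁ m₂ x y) := by
  obtain ⟨I, p, i, hp, hi, hfac⟩ := hFct m₁
  refine ⟨I, i, hi, fun x => ⟨?_, ?_⟩⟩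
  · rintro ⟨a, ha⟩
    obtain ⟨a', ha'⟩ := hp a
    exact ⟨a' ≫ m₂, a', by rw [← hfac, ← Category.assoc, ha', ha], rfl⟩
  · rintro ⟨y, a, ha1, _⟩
    exact ⟨a ≫ p, by rw [Category.assoc, hfac, ha1]⟩

end CETCS
end
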